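/- For integers n ≥ 2 define f_n(x) := sin(nx)² / (sin x · √(7 − cos(2x))). Then for every x ∈ (0, π/2), f_n(x) = ((15n−22)/(n−1))·f_{n−1}(x) − ((15n−23)/(n−1))·f_{n−2}(x) + ((n−2)/(n−1))·f_{n−3}(x) + (1/(n−1))·(d/dx)[√(7 − cos(2x))·cos((2n−3)x)], where the last term denotes the derivative at x of the function x ↦ √(7 − cos(2x))·cos((2n−3)x), and f_{−1} := 0, f_0 := 0. -/

import Mathlib

open Real Set

/-- `f_m(x) = sin(mx)² / (sin x · √(7 - cos 2x))` for `m ≥ 0`, extended by `0`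
for negative indices (note `f_0 = 0` holds for the formula as well). -/
noncomputable def triF (m : ℤ) (x : ℝ) : ℝ :=
  if 0 ≤ m then
    Real.sin (m * x) ^ 2 / (Real.sin x * Real.sqrt (7 - Real.cos (2 * x)))
  else 0

theorem triF_recurrence (n : ℤ) (hn : 2 ≤ n) (x : ℝ) (hx : x ∈ Set.Ioo 0 (π / 2)) :
    triF n x = ((15 * (n : ℝ) - 22) / ((n : ℝ) - 1)) * triF (n - 1) x
      - ((15 * (n : ℝ) - 23) / ((n : ℝ) - 1)) * triF (n - 2) x
      + (((n : ℝ) - 2) / ((n : ℝ) - 1)) * triF (n - 3) x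
      + (1 / ((n : ℝ) - 1)) *
          deriv (fun y : ℝ =>
            Real.sqrt (7 - Real.cos (2 * y)) * Real.cos ((2 * (n : ℝ) - 3) * y)) x := by
  obtain ⟨hx0, hx2⟩ := hx
  set m : ℝ := (n : ℝ) with hm
  have hsin : 0 < Real.sin x :=
    Real.sin_pos_of_pos_of_lt_pi hx0 (by linarith [Real.pi_pos])
  have hC : (0:ℝ) < 7 - Real.cos (2 * x) := by
    nlinarith [Real.neg_one_le_cos (2*x), Real.cos_le_one (2*x)]
  set s : ℝ := Real.sqrt (7 - Real.cos (2 * x)) with hsdef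
  have hs0 : 0 < s := Real.sqrt_pos.mpr hC
  have hs2 : s ^ 2 = 7 - Real.cos (2 * x) := Real.sq_sqrt hC.le
  have hm1 : m - 1 ≠ 0 := by
    have h2 : (2:ℝ) ≤ m := by rw [hm]; exact_mod_cast hn
    linarith
  -- derivative computation
  have hd1 : HasDerivAt (fun y : ℝ => 7 - Real.cos (2 * y)) (2 * Real.sin (2 * x)) x := by
    have h := (Real.hasDerivAt_cos (2*x)).comp x ((hasDerivAt_id x).const_mul 2)
    have h2 := (hasDerivAt_const x (7:ℝ)).sub h
    exact h2.congr_deriv (by ring)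
  have hd2 : HasDerivAt (fun y : ℝ => Real.cos ((2 * m - 3) * y))
      (-Real.sin ((2 * m - 3) * x) * (2 * m - 3)) x := by
    have h := (Real.hasDerivAt_cos ((2*m-3)*x)).comp x ((hasDerivAt_id x).const_mul (2*m-3))
    exact h.congr_deriv (by ring)
  have hsqrt : HasDerivAt (fun y : ℝ => Real.sqrt (7 - Real.cos (2 * y)))
      (2 * Real.sin (2 * x) / (2 * s)) x := hd1.sqrt (ne_of_gt hC)
  have hg := hsqrt.mul hd2
  have hderiv : deriv (fun y : ℝ =>
      Real.sqrt (7 - Real.cos (2 * y)) * Real.cos ((2 * m - 3) * y)) x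
      = 2 * Real.sin (2 * x) / (2 * s) * Real.cos ((2 * m - 3) * x)
        + s * (-Real.sin ((2 * m - 3) * x) * (2 * m - 3)) := hg.deriv
  -- the key trigonometric identity
  have pyth := Real.sin_sq_add_cos_sq x
  have key : (m - 1) * Real.sin (m * x) ^ 2
      = (15 * m - 22) * Real.sin ((m - 1) * x) ^ 2
        - (15 * m - 23) * Real.sin ((m - 2) * x) ^ 2
        + (m - 2) * Real.sin ((m - 3) * x) ^ 2
        + (Real.sin x * Real.sin (2 * x) * Real.cos ((2 * m - 3) * x)
            - (2 * m - 3) * (s ^ 2) * Real.sin x * Real.sin ((2 * m - 3) * x)) := by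
    rw [hs2]
    rw [Real.sin_sq_eq_half_sub (m * x), Real.sin_sq_eq_half_sub ((m - 1) * x), Real.sin_sq_eq_half_sub ((m - 2) * x),
        Real.sin_sq_eq_half_sub ((m - 3) * x)]
    rw [show 2 * (m * x) = (2 * m - 3) * x + 3 * x by ring, Real.cos_add]
    rw [show 2 * ((m - 1) * x) = (2 * m - 3) * x + x by ring, Real.cos_add]
    rw [show 2 * ((m - 2) * x) = (2 * m - 3) * x - x by ring, Real.cos_sub]
    rw [show 2 * ((m - 3) * x) = (2 * m - 3) * x - 3 * x by ring, Real.cos_sub]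
    rw [Real.cos_three_mul, Real.sin_three_mul, Real.cos_two_mul, Real.sin_two_mul]
    linear_combination (-2 * Real.cos x * Real.cos ((2*m-3)*x)
      - 2 * (2*m-3) * Real.sin x * Real.sin ((2*m-3)*x)) * pyth
  -- rewrite the derivative term as a fraction over sin x * s
  have hA : 2 * Real.sin (2 * x) / (2 * s) * Real.cos ((2 * m - 3) * x)
        + s * (-Real.sin ((2 * m - 3) * x) * (2 * m - 3))
      = (Real.sin x * Real.sin (2 * x) * Real.cos ((2 * m - 3) * x)
          - (2 * m - 3) * (s ^ 2) * Real.sin x * Real.sin ((2 * m - 3) * x))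
        / (Real.sin x * s) := by
    field_simp
    ring
  -- cast the triF terms
  have ht1 : triF (n - 1) x = Real.sin ((m - 1) * x) ^ 2 / (Real.sin x * s) := by
    rw [triF, if_pos (by omega)]
    push_cast
    rfl
  have ht2 : triF (n - 2) x = Real.sin ((m - 2) * x) ^ 2 / (Real.sin x * s) := by
    rw [triF, if_pos (by omega)]
    push_cast
    rfl
  have ht3 : ((m - 2) / (m - 1)) * triF (n - 3) x
      = ((m - 2) / (m - 1)) * (Real.sin ((m - 3) * x) ^ 2 / (Real.sin x * s)) := by
    rcases le_or_gt 0 (n - 3) with h | h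
    · rw [triF, if_pos h]
      push_cast
      rfl
    · have hn2 : n = 2 := by omega
      have : m - 2 = 0 := by rw [hm, hn2]; norm_num
      rw [this]
      simp
  have ht0 : triF n x = Real.sin (m * x) ^ 2 / (Real.sin x * s) := by
    rw [triF, if_pos (by omega)]
  rw [ht0, ht1, ht2, ht3, hderiv, hA]
  rw [mul_div_assoc', mul_div_assoc', mul_div_assoc', mul_div_assoc',
      ← sub_div, ← add_div, ← add_div]
  congr 1
  field_simp
  ring_nf at key ⊢
  linear_combination key
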